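/- Let 𝒜 be a finite category whose adjacency matrix [𝒜] admits both a weighting w and a coweighting v (so that Leinster's Euler characteristic χ_Lein(𝒜) = 1ᵀw is defined). Then χ_Lein(𝒜) = χ(𝒜); that is, 1ᵀ·w = 1ᵀ·[𝒜]⁺·1 for every weighting w of [𝒜], where [𝒜]⁺ is the Moore–Penrose inverse of [𝒜]. -/
import Mathlib


open Matrix CategoryTheory

/-- `Y` is a Moore–Penrose inverse of `M`. -/
def IsMoorePenrose {m n : Type*} [Fintype m] [Fintype n]
    (M : Matrix m n ℚ) (Y : Matrix n m ℚ) : Prop :=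
  M * Y * M = M ∧ Y * M * Y = Y ∧ (Y * M)ᵀ = Y * M ∧ (M * Y)ᵀ = M * Y

/-- The adjacency matrix of a finite category: its `(a,a')` entry is the cardinality of the
hom-set `a ⟶ a'`, as a rational number. -/
noncomputable def adjMat (A : Type*) [SmallCategory A] [Fintype A] : Matrix A A ℚ :=
  fun a a' => (Nat.card (a ⟶ a') : ℚ)

/-- If the adjacency matrix of a finite category `𝒜` admits both a weighting `w`
and a coweighting `v` (so Leinster's Euler characteristic `χ_Lein(𝒜) = 1ᵀw` is defined), then
`χ_Lein(𝒜) = χ(𝒜)`, i.e. `1ᵀ·w = 1ᵀ·[𝒜]⁺·1` where `[𝒜]⁺` is the Moore–Penrose inverse of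
the adjacency matrix `[𝒜]`. -/
theorem chiLein_eq_chi (A : Type) [SmallCategory A] [Fintype A]
    [∀ a b : A, Finite (a ⟶ b)]
    (w : A → ℚ) (hw : adjMat A *ᵥ w = 1)
    (v : A → ℚ) (hv : v ᵥ* adjMat A = 1)
    (Y : Matrix A A ℚ) (hY : IsMoorePenrose (adjMat A) Y) :
    (1 : A → ℚ) ⬝ᵥ w = (1 : A → ℚ) ⬝ᵥ (Y *ᵥ (1 : A → ℚ)) := by
  calc (1 : A → ℚ) ⬝ᵥ w = (v ᵥ* adjMat A) ⬝ᵥ w := by rw [hv]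
    _ = v ⬝ᵥ (adjMat A *ᵥ w) := (dotProduct_mulVec v (adjMat A) w).symm
    _ = v ⬝ᵥ ((adjMat A * Y * adjMat A) *ᵥ w) := by rw [hY.1]
    _ = v ⬝ᵥ (adjMat A *ᵥ (Y *ᵥ (adjMat A *ᵥ w))) := by
        rw [mulVec_mulVec, mulVec_mulVec]
    _ = (v ᵥ* adjMat A) ⬝ᵥ (Y *ᵥ (adjMat A *ᵥ w)) := dotProduct_mulVec v _ _
    _ = (1 : A → ℚ) ⬝ᵥ (Y *ᵥ (1 : A → ℚ)) := by rw [hv, hw]
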